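/- arXiv:2410.21246 — 4 statements merged into one kernel-verified Lean document; each statement's English description precedes it below -/
import Mathlib

section
/- Let μ > 0 and μₙ > 0 be real numbers, let p ∈ [0,1] and set q = 1 − p. Let U be the 10×10 real matrix with nonzero off-diagonal entries U(1,3)=pμ, U(1,6)=μₙ; U(2,1)=qμ, U(2,3)=pμ, U(2,7)=μₙ; U(3,9)=μₙ; U(4,5)=μₙ, U(4,8)=pμ, U(4,10)=qμ; U(5,6)=qμ, U(5,9)=pμ; U(6,9)=pμ; U(7,6)=qμ, U(7,9)=pμ; U(8,9)=μₙ; U(10,6)=μₙ, U(10,8)=pμ, and diagonal entries U(1,1)=−(pμ+μₙ), U(2,2)=U(3,3)=U(4,4)=U(5,5)=−(μ+μₙ), U(6,6)=−(pμ+μₙ), U(7,7)=U(8,8)=U(9,9)=−(μ+μₙ), U(10,10)=−(pμ+μₙ). Let σ be the row vector σ = (1/(μₙ+pμ))·(qμₙ, pμₙ, 0, pμ, 0, 0, 0, 0, 0, 0) and let θ be the column vector with entries θᵢ = 1 for i ∈ {6,7,8,9,10} and θᵢ = 0 otherwise. Then σU⁻¹θ ≠ 0 and −(σU⁻²θ)/(σU⁻¹θ)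 = (p²μ²(2μₙ+μ) + pμ(2μₙ+μ)² + 2μₙ(μₙ+μ)²) / ((μₙ+μ)²(pμ+μₙ)²). -/
/-- The 10×10 AMC sub-generator matrix of the probabilistic scheduler
sub-problem (rows/columns indexed 0–9 corresponding to states 1–10). -/
def psSubGenerator (μ μn p : ℝ) : Matrix (Fin 10) (Fin 10) ℝ :=
  let q := 1 - p
  !![-(p*μ+μn), 0, p*μ, 0, 0, μn, 0, 0, 0, 0;
     q*μ, -(μ+μn), p*μ, 0, 0, 0, μn, 0, 0, 0;
     0, 0, -(μ+μn), 0, 0, 0, 0, 0, μn, 0;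
     0, 0, 0, -(μ+μn), μn, 0, 0, p*μ, 0, q*μ;
     0, 0, 0, 0, -(μ+μn), q*μ, 0, 0, p*μ, 0;
     0, 0, 0, 0, 0, -(p*μ+μn), 0, 0, p*μ, 0;
     0, 0, 0, 0, 0, q*μ, -(μ+μn), 0, p*μ, 0;
     0, 0, 0, 0, 0, 0, 0, -(μ+μn), μn, 0;
     0, 0, 0, 0, 0, 0, 0, 0, -(μ+μn), 0;
     0, 0, 0, 0, 0, μn, 0, p*μ, 0, -(p*μ+μn)]

/-- The initial probability row vector σ of the transient states. -/
noncomputable def psSigma (μ μn p : ℝ) : Matrix (Fin 1) (Fin 10) ℝ :=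
  let q := 1 - p
  !![q*μn/(μn+p*μ), p*μn/(μn+p*μ), 0, p*μ/(μn+p*μ), 0, 0, 0, 0, 0, 0]

/-- The binary transient (column) vector θ, marking states 6–10. -/
def psTheta : Matrix (Fin 10) (Fin 1) ℝ :=
  !![0; 0; 0; 0; 0; 1; 1; 1; 1; 1]

section psAux
theorem vecMk0 {α : Type*} (h : 0 < 10) (a0 a1 a2 a3 a4 a5 a6 a7 a8 a9 : α) :
    (![a0,a1,a2,a3,a4,a5,a6,a7,a8,a9] : Fin 10 → α) ⟨0, h⟩ = a0 := rfl
theorem vecN0 {α : Type*} (a0 a1 a2 a3 a4 a5 a6 a7 a8 a9 : α) :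
    (![a0,a1,a2,a3,a4,a5,a6,a7,a8,a9] : Fin 10 → α) (0 : Fin 10) = a0 := rfl
theorem vecMk1 {α : Type*} (h : 1 < 10) (a0 a1 a2 a3 a4 a5 a6 a7 a8 a9 : α) :
    (![a0,a1,a2,a3,a4,a5,a6,a7,a8,a9] : Fin 10 → α) ⟨1, h⟩ = a1 := rfl
theorem vecN1 {α : Type*} (a0 a1 a2 a3 a4 a5 a6 a7 a8 a9 : α) :
    (![a0,a1,a2,a3,a4,a5,a6,a7,a8,a9] : Fin 10 → α) (1 : Fin 10) = a1 := rfl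
theorem vecMk2 {α : Type*} (h : 2 < 10) (a0 a1 a2 a3 a4 a5 a6 a7 a8 a9 : α) :
    (![a0,a1,a2,a3,a4,a5,a6,a7,a8,a9] : Fin 10 → α) ⟨2, h⟩ = a2 := rfl
theorem vecN2 {α : Type*} (a0 a1 a2 a3 a4 a5 a6 a7 a8 a9 : α) :
    (![a0,a1,a2,a3,a4,a5,a6,a7,a8,a9] : Fin 10 → α) (2 : Fin 10) = a2 := rfl
theorem vecMk3 {α : Type*} (h : 3 < 10) (a0 a1 a2 a3 a4 a5 a6 a7 a8 a9 : α) :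
    (![a0,a1,a2,a3,a4,a5,a6,a7,a8,a9] : Fin 10 → α) ⟨3, h⟩ = a3 := rfl
theorem vecN3 {α : Type*} (a0 a1 a2 a3 a4 a5 a6 a7 a8 a9 : α) :
    (![a0,a1,a2,a3,a4,a5,a6,a7,a8,a9] : Fin 10 → α) (3 : Fin 10) = a3 := rfl
theorem vecMk4 {α : Type*} (h : 4 < 10) (a0 a1 a2 a3 a4 a5 a6 a7 a8 a9 : α) :
    (![a0,a1,a2,a3,a4,a5,a6,a7,a8,a9] : Fin 10 → α) ⟨4, h⟩ = a4 := rfl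
theorem vecN4 {α : Type*} (a0 a1 a2 a3 a4 a5 a6 a7 a8 a9 : α) :
    (![a0,a1,a2,a3,a4,a5,a6,a7,a8,a9] : Fin 10 → α) (4 : Fin 10) = a4 := rfl
theorem vecMk5 {α : Type*} (h : 5 < 10) (a0 a1 a2 a3 a4 a5 a6 a7 a8 a9 : α) :
    (![a0,a1,a2,a3,a4,a5,a6,a7,a8,a9] : Fin 10 → α) ⟨5, h⟩ = a5 := rfl
theorem vecN5 {α : Type*} (a0 a1 a2 a3 a4 a5 a6 a7 a8 a9 : α) :
    (![a0,a1,a2,a3,a4,a5,a6,a7,a8,a9] : Fin 10 → α) (5 : Fin 10) = a5 := rfl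
theorem vecMk6 {α : Type*} (h : 6 < 10) (a0 a1 a2 a3 a4 a5 a6 a7 a8 a9 : α) :
    (![a0,a1,a2,a3,a4,a5,a6,a7,a8,a9] : Fin 10 → α) ⟨6, h⟩ = a6 := rfl
theorem vecN6 {α : Type*} (a0 a1 a2 a3 a4 a5 a6 a7 a8 a9 : α) :
    (![a0,a1,a2,a3,a4,a5,a6,a7,a8,a9] : Fin 10 → α) (6 : Fin 10) = a6 := rfl
theorem vecMk7 {α : Type*} (h : 7 < 10) (a0 a1 a2 a3 a4 a5 a6 a7 a8 a9 : α) :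
    (![a0,a1,a2,a3,a4,a5,a6,a7,a8,a9] : Fin 10 → α) ⟨7, h⟩ = a7 := rfl
theorem vecN7 {α : Type*} (a0 a1 a2 a3 a4 a5 a6 a7 a8 a9 : α) :
    (![a0,a1,a2,a3,a4,a5,a6,a7,a8,a9] : Fin 10 → α) (7 : Fin 10) = a7 := rfl
theorem vecMk8 {α : Type*} (h : 8 < 10) (a0 a1 a2 a3 a4 a5 a6 a7 a8 a9 : α) :
    (![a0,a1,a2,a3,a4,a5,a6,a7,a8,a9] : Fin 10 → α) ⟨8, h⟩ = a8 := rfl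
theorem vecN8 {α : Type*} (a0 a1 a2 a3 a4 a5 a6 a7 a8 a9 : α) :
    (![a0,a1,a2,a3,a4,a5,a6,a7,a8,a9] : Fin 10 → α) (8 : Fin 10) = a8 := rfl
theorem vecMk9 {α : Type*} (h : 9 < 10) (a0 a1 a2 a3 a4 a5 a6 a7 a8 a9 : α) :
    (![a0,a1,a2,a3,a4,a5,a6,a7,a8,a9] : Fin 10 → α) ⟨9, h⟩ = a9 := rfl
theorem vecN9 {α : Type*} (a0 a1 a2 a3 a4 a5 a6 a7 a8 a9 : α) :
    (![a0,a1,a2,a3,a4,a5,a6,a7,a8,a9] : Fin 10 → α) (9 : Fin 10) = a9 := rfl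

/-- Explicit solution X of (psSubGenerator) * X = psTheta. -/
noncomputable def psX (μ μn p : ℝ) : Matrix (Fin 10) (Fin 1) ℝ :=
    !![(-μn^3 - 2*μ*μn^2 - 2*μ*μn^2*p - μ^2*μn - μ^2*μn*p - μ^2*μn*p^2)/((μ+μn)^2*(p*μ+μn)^2);
      (-μn^4 - 3*μ*μn^3 - 2*μ*μn^3*p - 3*μ^2*μn^2 - 3*μ^2*μn^2*p - μ^2*μn^2*p^2 - μ^3*μn - μ^3*μn*p - μ^3*μn*p^2)/((μ+μn)^3*(p*μ+μn)^2);
      (-μn)/((μ+μn)^2);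
      (-3*μ*μn^3 - 5*μ^2*μn^2 - 2*μ^2*μn^2*p - 2*μ^3*μn - 3*μ^3*μn*p - μ^4*p)/((μ+μn)^3*(p*μ+μn)^2);
      (-μ*μn - μ^2)/((μ+μn)^2*(p*μ+μn));
      (-μn - μ - μ*p)/((μ+μn)*(p*μ+μn));
      (-μn^2 - 2*μ*μn - μ*μn*p - μ^2 - μ^2*p)/((μ+μn)^2*(p*μ+μn));
      (-2*μn - μ)/((μ+μn)^2);
      (-1)/((μ+μn));
      (-2*μn^3 - 4*μ*μn^2 - 4*μ*μn^2*p - 2*μ^2*μn - 4*μ^2*μn*p - 2*μ^2*μn*p^2 - μ^3*p - μ^3*p^2)/((μ+μn)^2*(p*μ+μn)^2)]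

/-- Explicit solution Y of (psSubGenerator) * Y = psX. -/
noncomputable def psY (μ μn p : ℝ) : Matrix (Fin 10) (Fin 1) ℝ :=
    !![(2*μn^4 + 6*μ*μn^3 + 6*μ*μn^3*p + 6*μ^2*μn^2 + 6*μ^2*μn^2*p + 6*μ^2*μn^2*p^2 + 2*μ^3*μn + 2*μ^3*μn*p + 2*μ^3*μn*p^2 + 2*μ^3*μn*p^3)/((μ+μn)^3*(p*μ+μn)^3);
      (2*μn^5 + 8*μ*μn^4 + 6*μ*μn^4*p + 12*μ^2*μn^3 + 12*μ^2*μn^3*p + 6*μ^2*μn^3*p^2 + 8*μ^3*μn^2 + 8*μ^3*μn^2*p + 8*μ^3*μn^2*p^2 + 2*μ^3*μn^2*p^3 + 2*μ^4*μn + 2*μ^4*μn*p + 2*μ^4*μn*p^2 + 2*μ^4*μn*p^3)/((μ+μn)^4*(p*μ+μn)^3);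
      (2*μn)/((μ+μn)^3);
      (8*μ*μn^4 + 17*μ^2*μn^3 + 9*μ^2*μn^3*p + 12*μ^3*μn^2 + 15*μ^3*μn^2*p + 3*μ^3*μn^2*p^2 + 3*μ^4*μn + 7*μ^4*μn*p + 4*μ^4*μn*p^2 + μ^5*p + μ^5*p^2)/((μ+μn)^4*(p*μ+μn)^3);
      (2*μ*μn^2 + 3*μ^2*μn + μ^2*μn*p + μ^3 + μ^3*p)/((μ+μn)^3*(p*μ+μn)^2);
      (μn^2 + 2*μ*μn + 2*μ*μn*p + μ^2 + μ^2*p + μ^2*p^2)/((μ+μn)^2*(p*μ+μn)^2);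
      (μn^3 + 3*μ*μn^2 + 2*μ*μn^2*p + 3*μ^2*μn + 3*μ^2*μn*p + μ^2*μn*p^2 + μ^3 + μ^3*p + μ^3*p^2)/((μ+μn)^3*(p*μ+μn)^2);
      (3*μn + μ)/((μ+μn)^3);
      (1)/((μ+μn)^2);
      (3*μn^4 + 9*μ*μn^3 + 9*μ*μn^3*p + 9*μ^2*μn^2 + 12*μ^2*μn^2*p + 9*μ^2*μn^2*p^2 + 3*μ^3*μn + 6*μ^3*μn*p + 6*μ^3*μn*p^2 + 3*μ^3*μn*p^3 + μ^4*p + μ^4*p^2 + μ^4*p^3)/((μ+μn)^3*(p*μ+μn)^3)]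

/-- Permutation putting psSubGenerator in upper-triangular form. -/
def psPerm : Fin 10 ≃ Fin 10 :=
  ⟨![1,3,0,9,4,6,7,2,5,8], ![2,0,7,1,4,8,5,6,9,3], by decide, by decide⟩

set_option maxHeartbeats 1000000 in
theorem psUX (μ μn p : ℝ) (ha' : μ + μn ≠ 0) (hb' : p * μ + μn ≠ 0) :
    psSubGenerator μ μn p * psX μ μn p = psTheta := by
  have hb'' : μ * p + μn ≠ 0 := by rwa [mul_comm]
  ext i j
  fin_cases j
  fin_cases i <;>
    · rw [Matrix.mul_apply, Fin.sum_univ_succ, Fin.sum_univ_succ, Fin.sum_univ_succ,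
        Fin.sum_univ_succ, Fin.sum_univ_succ, Fin.sum_univ_succ, Fin.sum_univ_succ,
        Fin.sum_univ_succ, Fin.sum_univ_succ, Fin.sum_univ_one]
      simp only [psSubGenerator, psTheta, psX, Matrix.of_apply, vecMk0, vecMk1, vecMk2, vecMk3, vecMk4, vecMk5, vecMk6, vecMk7, vecMk8, vecMk9,
        Matrix.cons_val_zero, Matrix.cons_val_succ, Matrix.cons_val_fin_one]
      field_simp
      try ring

set_option maxHeartbeats 1000000 in
theorem psUY (μ μn p : ℝ) (ha' : μ + μn ≠ 0) (hb' : p * μ + μn ≠ 0) :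
    psSubGenerator μ μn p * psY μ μn p = psX μ μn p := by
  have hb'' : μ * p + μn ≠ 0 := by rwa [mul_comm]
  ext i j
  fin_cases j
  fin_cases i <;>
    · rw [Matrix.mul_apply, Fin.sum_univ_succ, Fin.sum_univ_succ, Fin.sum_univ_succ,
        Fin.sum_univ_succ, Fin.sum_univ_succ, Fin.sum_univ_succ, Fin.sum_univ_succ,
        Fin.sum_univ_succ, Fin.sum_univ_succ, Fin.sum_univ_one]
      simp only [psSubGenerator, psX, psY, Matrix.of_apply, vecMk0, vecMk1, vecMk2, vecMk3, vecMk4, vecMk5, vecMk6, vecMk7, vecMk8, vecMk9,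
        Matrix.cons_val_zero, Matrix.cons_val_succ, Matrix.cons_val_fin_one]
      field_simp
      try ring

set_option maxHeartbeats 1000000 in
theorem psTri (μ μn p : ℝ) :
    ((psSubGenerator μ μn p).submatrix psPerm psPerm).BlockTriangular id := by
  intro i j hij
  fin_cases i <;> fin_cases j <;>
    first
      | exact absurd hij (by decide)
      | simp only [psSubGenerator, psPerm, Matrix.submatrix_apply, Equiv.coe_fn_mk,
          Matrix.of_apply, vecMk0, vecMk1, vecMk2, vecMk3, vecMk4, vecMk5, vecMk6, vecMk7, vecMk8, vecMk9, vecN0, vecN1, vecN2, vecN3, vecN4, vecN5, vecN6, vecN7, vecN8, vecN9,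
          Matrix.cons_val_zero, Matrix.cons_val_succ]

set_option maxHeartbeats 1000000 in
theorem psDet (μ μn p : ℝ) :
    (psSubGenerator μ μn p).det = (p*μ+μn)^3 * (μ+μn)^7 := by
  rw [← Matrix.det_submatrix_equiv_self psPerm, Matrix.det_of_upperTriangular (psTri μ μn p)]
  rw [Fin.prod_univ_succ, Fin.prod_univ_succ, Fin.prod_univ_succ, Fin.prod_univ_succ,
    Fin.prod_univ_succ, Fin.prod_univ_succ, Fin.prod_univ_succ, Fin.prod_univ_succ,
    Fin.prod_univ_succ, Fin.prod_univ_one]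
  simp only [psSubGenerator, psPerm, Matrix.submatrix_apply, Equiv.coe_fn_mk,
    Matrix.of_apply, vecN0, vecN1, vecN2, vecN3, vecN4, vecN5, vecN6, vecN7, vecN8, vecN9, Matrix.cons_val_zero, Matrix.cons_val_succ]
  ring

end psAux

set_option maxHeartbeats 1000000 in
theorem ps_mean_aoi_closed_form (μ μn p : ℝ) (hμ : 0 < μ) (hμn : 0 < μn)
    (hp : p ∈ Set.Icc (0:ℝ) 1) :
    (psSigma μ μn p * (psSubGenerator μ μn p)⁻¹ * psTheta) 0 0 ≠ 0 ∧
    -((psSigma μ μn p * ((psSubGenerator μ μn p)⁻¹ * (psSubGenerator μ μn p)⁻¹)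
        * psTheta) 0 0) /
      ((psSigma μ μn p * (psSubGenerator μ μn p)⁻¹ * psTheta) 0 0) =
      (p^2*μ^2*(2*μn+μ) + p*μ*(2*μn+μ)^2 + 2*μn*(μn+μ)^2) /
        ((μn+μ)^2*(p*μ+μn)^2) := by
  obtain ⟨hp0, hp1⟩ := hp
  have hpm : 0 ≤ p * μ := mul_nonneg hp0 hμ.le
  have ha : (0:ℝ) < μ + μn := by linarith
  have hb : (0:ℝ) < p * μ + μn := by linarith
  have ha' : μ + μn ≠ 0 := ne_of_gt ha
  have hb' : p * μ + μn ≠ 0 := ne_of_gt hb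
  have hab : μn + p * μ ≠ 0 := by linarith
  set A := psSubGenerator μ μn p with hA
  have hu : IsUnit A.det := by
    rw [hA, psDet μ μn p]
    exact (by positivity : ((p*μ+μn)^3 * (μ+μn)^7 : ℝ) ≠ 0).isUnit
  have hinv : A⁻¹ * A = 1 := Matrix.nonsing_inv_mul A hu
  have h1 : A⁻¹ * psTheta = psX μ μn p := by
    rw [← psUX μ μn p ha' hb', ← hA, ← Matrix.mul_assoc, hinv, Matrix.one_mul]
  have h2 : A⁻¹ * (A⁻¹ * psTheta) = psY μ μn p := by
    rw [h1, ← psUY μ μn p ha' hb', ← hA, ← Matrix.mul_assoc, hinv, Matrix.one_mul]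
  have e1 : (psSigma μ μn p * A⁻¹ * psTheta) 0 0 = -(1/(p*μ+μn)) := by
    rw [Matrix.mul_assoc, h1]
    rw [Matrix.mul_apply, Fin.sum_univ_succ, Fin.sum_univ_succ, Fin.sum_univ_succ,
        Fin.sum_univ_succ, Fin.sum_univ_succ, Fin.sum_univ_succ, Fin.sum_univ_succ,
        Fin.sum_univ_succ, Fin.sum_univ_succ, Fin.sum_univ_one]
    simp only [psSigma, psX, Matrix.of_apply, Matrix.cons_val_zero, Matrix.cons_val_succ,
      Matrix.cons_val_fin_one]
    field_simp
    try ring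
  have e2 : (psSigma μ μn p * (A⁻¹ * A⁻¹) * psTheta) 0 0 =
      (p^2*μ^2*(2*μn+μ) + p*μ*(2*μn+μ)^2 + 2*μn*(μn+μ)^2) /
        ((μn+μ)^2*(p*μ+μn)^3) := by
    rw [Matrix.mul_assoc, Matrix.mul_assoc, h2]
    rw [Matrix.mul_apply, Fin.sum_univ_succ, Fin.sum_univ_succ, Fin.sum_univ_succ,
        Fin.sum_univ_succ, Fin.sum_univ_succ, Fin.sum_univ_succ, Fin.sum_univ_succ,
        Fin.sum_univ_succ, Fin.sum_univ_succ, Fin.sum_univ_one]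
    simp only [psSigma, psY, Matrix.of_apply, Matrix.cons_val_zero, Matrix.cons_val_succ,
      Matrix.cons_val_fin_one]
    field_simp
    try ring
  constructor
  · rw [e1]
    simp [hb']
  · rw [e1, e2]
    field_simp
    try ring
end

section
/- Let N ≥ 1, let μ > 0, and for each n let wₙ > 0 and μₙ > 0 be real numbers. Then the function Δ̄(p₁,…,p_N) = Σₙ wₙ · (pₙ²μ²(2μₙ+μ) + pₙμ(2μₙ+μ)² + 2μₙ(μₙ+μ)²) / ((μₙ+μ)²(pₙμ+μₙ)²) is convex on the set {p ∈ ℝᴺ : pₙ ≥ 0 for all n}. -/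
open Set Finset

private lemma convexOn_congr' {E : Type*} [AddCommMonoid E] [Module ℝ E] {s : Set E}
    {f g : E → ℝ} (hg : ConvexOn ℝ s g) (h : ∀ x ∈ s, f x = g x) : ConvexOn ℝ s f := by
  refine ⟨hg.1, fun x hx y hy a b ha hb hab => ?_⟩
  rw [h _ hx, h _ hy, h _ (hg.1 hx hy ha hb hab)]
  exact hg.2 hx hy ha hb hab

private lemma convexOn_finset_sum {E : Type*} [AddCommMonoid E] [Module ℝ E]
    {ι : Type*} (t : Finset ι) {s : Set E} (hs : Convex ℝ s) {f : ι → E → ℝ}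
    (h : ∀ i ∈ t, ConvexOn ℝ s (f i)) :
    ConvexOn ℝ s (fun x => ∑ i ∈ t, f i x) := by
  classical
  induction t using Finset.induction_on with
  | empty => simpa using convexOn_const 0 hs
  | @insert a t' hi ih =>
    simp only [Finset.sum_insert hi]
    exact (h a (Finset.mem_insert_self a t')).add
      (ih fun i hit => h i (Finset.mem_insert_of_mem hit))

private lemma inv_affine_convexOn (μ a : ℝ) (hμ : 0 < μ) (ha : 0 < a) (m : ℤ) :
    ConvexOn ℝ (Ici (0:ℝ)) (fun x : ℝ => (x * μ + a) ^ m) := by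
  have hL : ∀ x : ℝ, (AffineMap.lineMap a (a + μ) : ℝ →ᵃ[ℝ] ℝ) x = x * μ + a := by
    intro x
    simp [AffineMap.lineMap_apply, smul_eq_mul]
  have h := (convexOn_zpow (𝕜 := ℝ) m).comp_affineMap (AffineMap.lineMap a (a + μ))
  have h' : ConvexOn ℝ ((AffineMap.lineMap a (a + μ) : ℝ →ᵃ[ℝ] ℝ) ⁻¹' (Ioi 0))
      (fun x : ℝ => (x * μ + a) ^ m) := by
    refine convexOn_congr' h fun x _ => ?_
    simp [Function.comp, hL]
  refine h'.subset (fun x hx => ?_) (convex_Ici 0)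
  simp only [Set.mem_preimage, hL, Set.mem_Ioi]
  have : (0:ℝ) ≤ x * μ := mul_nonneg hx hμ.le
  linarith

private lemma coord_convexOn (μ a w : ℝ) (hμ : 0 < μ) (ha : 0 < a) (hw : 0 < w) :
    ConvexOn ℝ (Ici (0:ℝ)) (fun x : ℝ => w *
      ((x^2*μ^2*(2*a+μ) + x*μ*(2*a+μ)^2 + 2*a*(a+μ)^2) / ((a+μ)^2*(x*μ+a)^2))) := by
  have haμ : 0 < a + μ := by linarith
  set C0 : ℝ := w * (2*a+μ) / (a+μ)^2 with hC0
  set C1 : ℝ := w * μ * (2*a+μ) / (a+μ)^2 with hC1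
  set C2 : ℝ := w * a * μ / (a+μ) with hC2
  have hC1n : 0 ≤ C1 := by positivity
  have hC2n : 0 ≤ C2 := by positivity
  have hg : ConvexOn ℝ (Ici (0:ℝ))
      (fun x : ℝ => C0 + C1 * (x*μ+a) ^ (-1:ℤ) + C2 * (x*μ+a) ^ (-2:ℤ)) := by
    have h1 := (inv_affine_convexOn μ a hμ ha (-1)).smul (c := C1) hC1n
    have h2 := (inv_affine_convexOn μ a hμ ha (-2)).smul (c := C2) hC2n
    have h0 : ConvexOn ℝ (Ici (0:ℝ)) (fun _ : ℝ => C0) := convexOn_const C0 (convex_Ici 0)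
    simp only [smul_eq_mul] at h1 h2
    exact (h0.add h1).add h2
  refine convexOn_congr' hg fun x hx => ?_
  have hx0 : (0:ℝ) ≤ x := hx
  have ht : 0 < x * μ + a := by nlinarith
  rw [hC0, hC1, hC2]
  rw [zpow_neg, zpow_neg, zpow_one, zpow_two]
  field_simp
  ring

theorem weighted_aoi_convexOn (N : ℕ) (hN : 1 ≤ N)
    (μ : ℝ) (hμ : 0 < μ) (w μd : Fin N → ℝ)
    (hw : ∀ n, 0 < w n) (hμd : ∀ n, 0 < μd n) :
    ConvexOn ℝ {p : Fin N → ℝ | ∀ n, 0 ≤ p n}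
      (fun p => ∑ n, w n *
        (((p n)^2*μ^2*(2*μd n+μ) + p n*μ*(2*μd n+μ)^2 + 2*μd n*(μd n+μ)^2) /
          ((μd n+μ)^2*(p n*μ+μd n)^2))) := by
  have hS : Convex ℝ {p : Fin N → ℝ | ∀ n, 0 ≤ p n} := by
    intro x hx y hy a b ha hb hab n
    exact add_nonneg (mul_nonneg ha (hx n)) (mul_nonneg hb (hy n))
  refine convexOn_finset_sum Finset.univ hS fun n _ => ?_
  have hc := coord_convexOn μ (μd n) (w n) hμ (hμd n) (hw n)
  have h := hc.comp_affineMap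
    ((LinearMap.proj n : (Fin N → ℝ) →ₗ[ℝ] ℝ).toAffineMap)
  refine (convexOn_congr' h fun p _ => rfl).subset (fun p hp => ?_) hS
  exact hp n
end

section
/- Let N ≥ 1, let a₁,…,a_N, b₁,…,b_N be positive reals, let μ > 0 and μₙ > 0 for each n, and set η = μ + Σₙ μₙ. For λ > 0 let zₙ(λ) denote the unique positive root of λy³ − aₙy − 2bₙ = 0, and define g(λ) = Σₙ max{zₙ(λ), μₙ}. Then there exists a unique λ* > 0 such that g(λ*) = η. -/
lemma wf_root_gt (a b lam y : ℝ) (hb : 0 < b) (hy : 0 < y)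
    (e : lam * y^3 - a * y - 2 * b = 0) : a < lam * y^2 := by
  nlinarith [mul_pos hy hb, sq_nonneg y]

lemma wf_root_unique (a b lam y1 y2 : ℝ) (hb : 0 < b) (hlam : 0 < lam)
    (hy1 : 0 < y1) (hy2 : 0 < y2)
    (e1 : lam * y1^3 - a * y1 - 2 * b = 0) (e2 : lam * y2^3 - a * y2 - 2 * b = 0) :
    y1 = y2 := by
  have h1 := wf_root_gt a b lam y1 hb hy1 e1
  have h2 := wf_root_gt a b lam y2 hb hy2 e2
  rcases lt_trichotomy y1 y2 with h | h | h
  · nlinarith [mul_pos (sub_pos.2 h) (sub_pos.2 h1),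
      mul_pos (mul_pos hlam (sub_pos.2 h)) (mul_pos hy1 hy2),
      mul_pos (mul_pos hlam (sub_pos.2 h)) (mul_pos hy2 hy2)]
  · exact h
  · nlinarith [mul_pos (sub_pos.2 h) (sub_pos.2 h2),
      mul_pos (mul_pos hlam (sub_pos.2 h)) (mul_pos hy1 hy2),
      mul_pos (mul_pos hlam (sub_pos.2 h)) (mul_pos hy1 hy1)]

lemma wf_root_anti (a b lam1 lam2 y1 y2 : ℝ) (hb : 0 < b)
    (hlam1 : 0 < lam1) (h12 : lam1 < lam2) (hy1 : 0 < y1) (hy2 : 0 < y2)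
    (e1 : lam1 * y1^3 - a * y1 - 2 * b = 0) (e2 : lam2 * y2^3 - a * y2 - 2 * b = 0) :
    y2 < y1 := by
  have h1 := wf_root_gt a b lam1 y1 hb hy1 e1
  by_contra h
  push_neg at h
  nlinarith [mul_nonneg (sub_nonneg.2 h) (sub_pos.2 h1).le,
    mul_pos (sub_pos.2 h12) (pow_pos hy2 3),
    mul_nonneg (mul_nonneg hlam1.le (sub_nonneg.2 h)) (mul_pos hy1 hy2).le,
    mul_nonneg (mul_nonneg hlam1.le (sub_nonneg.2 h)) (mul_pos hy2 hy2).le]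

theorem waterfilling_unique_lambda (N : ℕ) (hN : 1 ≤ N)
    (a b : Fin N → ℝ) (ha : ∀ n, 0 < a n) (hb : ∀ n, 0 < b n)
    (μ : ℝ) (hμ : 0 < μ) (μd : Fin N → ℝ) (hμd : ∀ n, 0 < μd n)
    (z : Fin N → ℝ → ℝ)
    (hz : ∀ n, ∀ lam : ℝ, 0 < lam →
      0 < z n lam ∧ lam * (z n lam)^3 - a n * (z n lam) - 2 * b n = 0) :
    ∃! lam : ℝ, 0 < lam ∧
      ∑ n, max (z n lam) (μd n) = μ + ∑ n, μd n := by
  set g : ℝ → ℝ := fun lam => ∑ n, max (z n lam) (μd n) with hg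
  set η : ℝ := μ + ∑ n, μd n with hη
  -- h n y : the lambda for which y is the root
  set H : Fin N → ℝ → ℝ := fun n y => (a n * y + 2 * b n) / y^3 with hH
  have hHpos : ∀ n y, 0 < y → 0 < H n y := by
    intro n y hy
    exact div_pos (by nlinarith [ha n, hb n]) (pow_pos hy 3)
  have hHroot : ∀ n y, 0 < y → H n y * y^3 - a n * y - 2 * b n = 0 := by
    intro n y hy
    rw [hH]; dsimp only; rw [div_mul_cancel₀ _ (pow_ne_zero 3 hy.ne')]; ring
  have hzH : ∀ n y, 0 < y → z n (H n y) = y := by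
    intro n y hy
    obtain ⟨hp, he⟩ := hz n (H n y) (hHpos n y hy)
    exact wf_root_unique (a n) (b n) (H n y) _ y (hb n) (hHpos n y hy) hp hy he
      (hHroot n y hy)
  have hanti : ∀ n (lam1 lam2 : ℝ), 0 < lam1 → lam1 < lam2 → z n lam2 < z n lam1 := by
    intro n lam1 lam2 h1 h12
    obtain ⟨p1, e1⟩ := hz n lam1 h1
    obtain ⟨p2, e2⟩ := hz n lam2 (h1.trans h12)
    exact wf_root_anti (a n) (b n) lam1 lam2 _ _ (hb n) h1 h12 p1 p2 e1 e2
  -- continuity of z n at positive points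
  have hcont : ∀ n (lam0 : ℝ), 0 < lam0 → ContinuousAt (z n) lam0 := by
    intro n lam0 hlam0
    rw [Metric.continuousAt_iff]
    intro ε hε
    set y0 : ℝ := z n lam0 with hy0def
    have hy0 : 0 < y0 := (hz n lam0 hlam0).1
    set ε' : ℝ := min (ε / 2) (y0 / 2) with hε'
    have hε'pos : 0 < ε' := lt_min (by linarith) (by linarith)
    have hylo : 0 < y0 - ε' := by
      have : ε' ≤ y0 / 2 := min_le_right _ _
      linarith
    have hyhi : 0 < y0 + ε' := by linarith
    set lamlo : ℝ := H n (y0 + ε') with hlamlo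
    set lamhi : ℝ := H n (y0 - ε') with hlamhi
    have hlamlopos : 0 < lamlo := hHpos n _ hyhi
    have hlamhipos : 0 < lamhi := hHpos n _ hylo
    have hzlo : z n lamlo = y0 + ε' := hzH n _ hyhi
    have hzhi : z n lamhi = y0 - ε' := hzH n _ hylo
    have hlo : lamlo < lam0 := by
      rcases lt_trichotomy lamlo lam0 with h | h | h
      · exact h
      · exfalso; rw [h] at hzlo; linarith
      · exfalso; have := hanti n lam0 lamlo hlam0 h; rw [hzlo] at this; linarith
    have hhi : lam0 < lamhi := by
      rcases lt_trichotomy lam0 lamhi with h | h | h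
      · exact h
      · exfalso; rw [← h] at hzhi; linarith
      · exfalso; have := hanti n lamhi lam0 hlamhipos h; rw [hzhi] at this; linarith
    refine ⟨min (lam0 - lamlo) (lamhi - lam0), lt_min (by linarith) (by linarith), ?_⟩
    intro lam hdist
    rw [Real.dist_eq] at hdist ⊢
    have h1 : |lam - lam0| < lam0 - lamlo := lt_of_lt_of_le hdist (min_le_left _ _)
    have h2 : |lam - lam0| < lamhi - lam0 := lt_of_lt_of_le hdist (min_le_right _ _)
    rw [abs_lt] at h1 h2
    have hlam1 : lamlo < lam := by linarith
    have hlam2 : lam < lamhi := by linarith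
    have hlampos : 0 < lam := hlamlopos.trans hlam1
    have hub : z n lam < y0 + ε' := by
      have := hanti n lamlo lam hlamlopos hlam1; rw [hzlo] at this; linarith
    have hlb : y0 - ε' < z n lam := by
      have := hanti n lam lamhi hlampos hlam2; rw [hzhi] at this; linarith
    rw [abs_lt]
    have : ε' ≤ ε / 2 := min_le_left _ _
    constructor <;> simp only [hy0def] at hub hlb <;> linarith
  -- index 0
  have h0N : 0 < N := hN
  set n0 : Fin N := ⟨0, h0N⟩ with hn0
  -- lower bound lambda
  set Y : ℝ := μ + ∑ n, μd n with hY
  have hYpos : 0 < Y := by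
    have : 0 ≤ ∑ n, μd n := Finset.sum_nonneg fun n _ => (hμd n).le
    simp only [hY]; linarith
  set lamA : ℝ := H n0 Y with hlamA
  have hlamApos : 0 < lamA := hHpos n0 Y hYpos
  have hzA : z n0 lamA = Y := hzH n0 Y hYpos
  have hgA : η ≤ g lamA := by
    have hterm : ∀ n ∈ Finset.univ, 0 ≤ max (z n lamA) (μd n) - μd n := by
      intro n _; have := le_max_right (z n lamA) (μd n); linarith
    have hsingle := Finset.single_le_sum hterm (Finset.mem_univ n0)
    have hsum : ∑ n, (max (z n lamA) (μd n) - μd n) = g lamA - ∑ n, μd n := by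
      rw [Finset.sum_sub_distrib]
    have hmax0 : Y ≤ max (z n0 lamA) (μd n0) := by rw [← hzA]; exact le_max_left _ _
    have hμd0 : μd n0 ≤ ∑ n, μd n :=
      Finset.single_le_sum (fun n _ => (hμd n).le) (Finset.mem_univ n0)
    simp only [hη]
    rw [hsum] at hsingle
    simp only [hY] at hmax0
    linarith
  -- upper bound lambda
  set lamB : ℝ := lamA + 1 + ∑ n, H n (μd n) with hlamB
  have hHn : ∀ n : Fin N, 0 < H n (μd n) := fun n => hHpos n _ (hμd n)
  have hAB : lamA < lamB := by
    have : 0 ≤ ∑ n, H n (μd n) := Finset.sum_nonneg fun n _ => (hHn n).le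
    simp only [hlamB]; linarith
  have hlamBpos : 0 < lamB := hlamApos.trans hAB
  have hzB : ∀ n, z n lamB < μd n := by
    intro n
    have hlt : H n (μd n) < lamB := by
      have hle : H n (μd n) ≤ ∑ m, H m (μd m) :=
        Finset.single_le_sum (fun m _ => (hHn m).le) (Finset.mem_univ n)
      simp only [hlamB]; linarith
    have := hanti n (H n (μd n)) lamB (hHn n) hlt
    rwa [hzH n _ (hμd n)] at this
  have hgB : g lamB < η := by
    have : g lamB = ∑ n, μd n := by
      apply Finset.sum_congr rfl
      intro n _
      exact max_eq_right (hzB n).le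
    rw [this, hη]; linarith
  -- IVT
  have hgcont : ContinuousOn g (Set.Icc lamA lamB) := by
    intro lam hlam
    have hlampos : 0 < lam := hlamApos.trans_le hlam.1
    apply ContinuousAt.continuousWithinAt
    apply tendsto_finset_sum
    intro n _
    exact (hcont n lam hlampos).max continuousAt_const
  have hmem : η ∈ Set.Icc (g lamB) (g lamA) := ⟨hgB.le, hgA⟩
  obtain ⟨lamS, hmemI, heqS⟩ := intermediate_value_Icc' hAB.le hgcont hmem
  have hlamSpos : 0 < lamS := hlamApos.trans_le hmemI.1
  -- strict decrease where g > sum μd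
  have hkey : ∀ l1 l2 : ℝ, 0 < l1 → l1 < l2 → g l1 = η → g l2 < g l1 := by
    intro l1 l2 hl1 hl12 hgl1
    have hsumlt : ∑ n, μd n < g l1 := by
      rw [hgl1, hη]; linarith
    have hex : ∃ n : Fin N, μd n < z n l1 := by
      by_contra hcon
      push_neg at hcon
      have : g l1 = ∑ n, μd n := Finset.sum_congr rfl fun n _ => max_eq_right (hcon n)
      linarith
    obtain ⟨m, hm⟩ := hex
    apply Finset.sum_lt_sum
    · intro n _
      exact max_le_max (hanti n l1 l2 hl1 hl12).le le_rfl
    · refine ⟨m, Finset.mem_univ m, ?_⟩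
      have h1 : max (z m l1) (μd m) = z m l1 := max_eq_left (hm.le)
      rw [h1]
      exact max_lt (hanti m l1 l2 hl1 hl12) hm
  refine ⟨lamS, ⟨hlamSpos, heqS⟩, ?_⟩
  intro y hy
  obtain ⟨hypos, hyeq⟩ := hy
  rcases lt_trichotomy y lamS with h | h | h
  · exfalso
    have hyeq' : g y = η := hyeq
    have := hkey y lamS hypos h hyeq'
    rw [heqS, hyeq'] at this; exact lt_irrefl _ this
  · exact h
  · exfalso
    have hyeq' : g y = η := hyeq
    have := hkey lamS y hlamSpos h heqS
    rw [heqS, hyeq'] at this; exact lt_irrefl _ this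
end

section
/- Let N ≥ 1, let a₁,…,a_N, b₁,…,b_N be positive reals, let μ > 0 and μₙ > 0 for each n, and set η = μ + Σₙ μₙ. For λ > 0 let zₙ(λ) denote the unique positive root of λy³ − aₙy − 2bₙ = 0, and let λ* > 0 be such that Σₙ max{zₙ(λ*), μₙ} = η. Then the vector y* with yₙ* = max{zₙ(λ*), μₙ} is the unique global minimizer of F(y) = Σₙ (aₙ/yₙ + bₙ/yₙ²) over the set {y ∈ ℝᴺ : yₙ ≥ μₙ for all n, Σₙ yₙ = η}. -/
lemma conv_lt (a b x t : ℝ) (ha : 0 < a) (hb : 0 < b) (hx : 0 < x) (ht : 0 < t)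
    (hne : t ≠ x) :
    a/x + b/x^2 - (a/x^2 + 2*b/x^3)*(t-x) < a/t + b/t^2 := by
  rw [← sub_pos]
  have hsq : 0 < (t - x)^2 :=
    lt_of_le_of_ne (sq_nonneg _) (Ne.symm (pow_ne_zero 2 (sub_ne_zero.mpr hne)))
  have hkey : (a/t + b/t^2) - (a/x + b/x^2 - (a/x^2 + 2*b/x^3)*(t-x))
      = (a*t*x*(t-x)^2 + b*(t-x)^2*(2*t+x)) / (t^2*x^3) := by
    field_simp
    ring
  rw [hkey]
  apply div_pos
  · have h1 : 0 < a*t*x*(t-x)^2 := by positivity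
    have h2 : 0 < b*(t-x)^2*(2*t+x) := by positivity
    linarith
  · positivity

lemma per_lt (a b lam zz m t : ℝ) (ha : 0 < a) (hb : 0 < b) (hlam : 0 < lam)
    (hz : 0 < zz) (hm : 0 < m)
    (hroot : lam * zz^3 - a * zz - 2*b = 0) (htm : m ≤ t)
    (hne : t ≠ max zz m) :
    a / max zz m + b / (max zz m)^2 + lam * max zz m < a/t + b/t^2 + lam*t := by
  have ht : 0 < t := lt_of_lt_of_le hm htm
  rcases le_total zz m with hc | hc
  · -- x = m, lam*m^3 - a*m - 2*b ≥ 0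
    rw [max_eq_right hc] at hne ⊢
    have hcm : a/m^2 + 2*b/m^3 ≤ lam := by
      have h1 : a < lam * zz^2 := by nlinarith [mul_pos hz hz]
      have h2 : 0 ≤ lam*(m^2 + m*zz + zz^2) - a := by nlinarith [mul_nonneg hlam.le (mul_nonneg (sub_nonneg.mpr hc) (by positivity : (0:ℝ) ≤ m + zz)), mul_pos hlam (mul_pos hm hz)]
      have hge : a*m + 2*b ≤ lam * m^3 := by
        nlinarith [mul_nonneg (sub_nonneg.mpr hc) h2]
      rw [div_add_div _ _ (by positivity) (by positivity), div_le_iff₀ (by positivity)]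
      nlinarith [pow_pos hm 2, pow_pos hm 3]
    have hconv := conv_lt a b m t ha hb hm ht hne
    nlinarith [mul_nonneg (sub_nonneg.mpr hcm) (sub_nonneg.mpr htm)]
  · -- x = zz, c = lam exactly
    rw [max_eq_left hc] at hne ⊢
    have hceq : a/zz^2 + 2*b/zz^3 = lam := by
      field_simp
      nlinarith [pow_pos hz 3]
    have hconv := conv_lt a b zz t ha hb hz ht hne
    nlinarith [hconv]

lemma per_le (a b lam zz m t : ℝ) (ha : 0 < a) (hb : 0 < b) (hlam : 0 < lam)
    (hz : 0 < zz) (hm : 0 < m)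
    (hroot : lam * zz^3 - a * zz - 2*b = 0) (htm : m ≤ t) :
    a / max zz m + b / (max zz m)^2 + lam * max zz m ≤ a/t + b/t^2 + lam*t := by
  rcases eq_or_ne t (max zz m) with h | h
  · rw [h]
  · exact (per_lt a b lam zz m t ha hb hlam hz hm hroot htm h).le

theorem waterfilling_correctness (N : ℕ) (hN : 1 ≤ N)
    (a b : Fin N → ℝ) (ha : ∀ n, 0 < a n) (hb : ∀ n, 0 < b n)
    (μ : ℝ) (hμ : 0 < μ) (μd : Fin N → ℝ) (hμd : ∀ n, 0 < μd n)
    (z : Fin N → ℝ → ℝ)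
    (hz : ∀ n, ∀ lam : ℝ, 0 < lam →
      0 < z n lam ∧ lam * (z n lam)^3 - a n * (z n lam) - 2 * b n = 0)
    (lamStar : ℝ) (hlam : 0 < lamStar)
    (hsum : ∑ n, max (z n lamStar) (μd n) = μ + ∑ n, μd n) :
    let yStar : Fin N → ℝ := fun n => max (z n lamStar) (μd n)
    ((∀ n, μd n ≤ yStar n) ∧ ∑ n, yStar n = μ + ∑ n, μd n) ∧
    ∀ y : Fin N → ℝ, (∀ n, μd n ≤ y n) → ∑ n, y n = μ + ∑ n, μd n →
      y ≠ yStar →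
      ∑ n, (a n / yStar n + b n / (yStar n)^2) <
        ∑ n, (a n / y n + b n / (y n)^2) := by
  intro yStar
  refine ⟨⟨fun n => le_max_right _ _, hsum⟩, ?_⟩
  intro y hy hysum hne
  obtain ⟨m, hm⟩ := Function.ne_iff.mp hne
  have key : ∑ n, (a n / yStar n + b n / (yStar n)^2 + lamStar * yStar n) <
      ∑ n, (a n / y n + b n / (y n)^2 + lamStar * y n) := by
    apply Finset.sum_lt_sum
    · intro n _
      exact per_le (a n) (b n) lamStar (z n lamStar) (μd n) (y n) (ha n) (hb n)
        hlam (hz n lamStar hlam).1 (hμd n) (hz n lamStar hlam).2 (hy n)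
    · exact ⟨m, Finset.mem_univ m,
        per_lt (a m) (b m) lamStar (z m lamStar) (μd m) (y m) (ha m) (hb m)
          hlam (hz m lamStar hlam).1 (hμd m) (hz m lamStar hlam).2 (hy m) hm⟩
  have e1 : ∑ n, (a n / yStar n + b n / (yStar n)^2 + lamStar * yStar n)
      = ∑ n, (a n / yStar n + b n / (yStar n)^2) + lamStar * (μ + ∑ n, μd n) := by
    rw [Finset.sum_add_distrib, ← Finset.mul_sum, hsum]
  have e2 : ∑ n, (a n / y n + b n / (y n)^2 + lamStar * y n)
      = ∑ n, (a n / y n + b n / (y n)^2) + lamStar * (μ + ∑ n, μd n) := by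
    rw [Finset.sum_add_distrib, ← Finset.mul_sum, hysum]
  rw [e1, e2] at key
  linarith
end
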